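/- For Δ > 1, the superlacunary function s(t) = Σ_{k=1}^∞ k^{−2Δ}·exp(i·2^{2^k}·t) satisfies the upper bound: there exists C₄ < ∞ such that ω[s](δ) ≤ C₄·(ln|ln δ|)^{1−2Δ} for all δ ∈ (0, e^{−e}). -/

import Mathlib

open Complex Real

/-- The superlacunary function `s(t) = Σ_{k=1}^∞ k^{-2Δ} exp(i 2^{2^k} t)`. -/
noncomputable def superlacFun (Δ : ℝ) (t : ℝ) : ℂ :=
  ∑' k : ℕ, (((k : ℝ) + 1) ^ (-(2 * Δ)) : ℝ) *
    Complex.exp (Complex.I * (2 : ℂ) ^ (2 ^ (k + 1)) * (t : ℂ))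

/-- Modulus of continuity of a complex-valued function on ℝ. -/
noncomputable def modCont (f : ℝ → ℂ) (δ : ℝ) : ℝ :=
  sSup {y : ℝ | ∃ t h : ℝ, |h| ≤ δ ∧ y = ‖f (t + h) - f t‖}

lemma aux_abs_exp_I_sub_one_le (θ : ℝ) :
    ‖Complex.exp ((θ : ℂ) * Complex.I) - 1‖ ≤ |θ| := by
  have hrw : Complex.exp ((θ : ℂ) * Complex.I) - 1
      = ((Real.cos θ - 1 : ℝ) : ℂ) + ((Real.sin θ : ℝ) : ℂ) * Complex.I := by
    rw [Complex.exp_mul_I, ← Complex.ofReal_cos, ← Complex.ofReal_sin]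
    push_cast
    ring
  rw [hrw, Complex.norm_add_mul_I, ← Real.sqrt_sq_eq_abs]
  apply Real.sqrt_le_sqrt
  have hs : |Real.sin (θ/2)| ≤ |θ/2| := Real.abs_sin_le_abs
  have hs2 : Real.sin (θ/2)^2 ≤ (θ/2)^2 := by
    rw [← _root_.sq_abs (Real.sin (θ/2)), ← _root_.sq_abs (θ/2)]
    exact pow_le_pow_left₀ (abs_nonneg _) hs 2
  have hc : Real.cos θ = Real.cos (θ/2)^2 - Real.sin (θ/2)^2 := by
    have := Real.cos_two_mul' (θ/2)
    rw [show 2*(θ/2) = θ by ring] at this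
    exact this
  have hpy : Real.sin (θ/2)^2 + Real.cos (θ/2)^2 = 1 := Real.sin_sq_add_cos_sq _
  have hpy2 : Real.sin θ^2 + Real.cos θ^2 = 1 := Real.sin_sq_add_cos_sq _
  nlinarith [hs2, hc, hpy, hpy2]

lemma aux_abs_exp_I_sub_one_le_two (θ : ℝ) :
    ‖Complex.exp ((θ : ℂ) * Complex.I) - 1‖ ≤ 2 := by
  have h := norm_sub_le (Complex.exp ((θ:ℂ) * Complex.I)) 1
  have h1 : ‖Complex.exp ((θ:ℂ) * Complex.I)‖ = 1 := Complex.norm_exp_ofReal_mul_I θ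
  rw [h1] at h
  simpa using h.trans (by norm_num)

lemma aux_step {p : ℝ} (hp : 1 ≤ p) {x : ℝ} (hx : 1 ≤ x) :
    (x+1) ^ (-(p+1)) ≤ p⁻¹ * (x ^ (-p) - (x+1) ^ (-p)) := by
  have hx0 : (0:ℝ) < x := by linarith
  have hx1 : (0:ℝ) < x + 1 := by linarith
  have hp0 : (0:ℝ) < p := by linarith
  set A := x ^ p with hA
  set B := (x+1) ^ p with hB
  have hA0 : 0 < A := rpow_pos_of_pos hx0 p
  have hB0 : 0 < B := rpow_pos_of_pos hx1 p
  have hxinv : (-1:ℝ) ≤ 1/x := by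
    have : (0:ℝ) < 1/x := by positivity
    linarith
  have hBer : 1 + p * (1/x) ≤ (1 + 1/x) ^ p :=
    one_add_mul_self_le_rpow_one_add hxinv hp
  have hmul : B = A * (1 + 1/x) ^ p := by
    rw [hA, hB, ← Real.mul_rpow hx0.le (by positivity)]
    congr 1
    field_simp
  have hAB : A * (x+1) + p * A ≤ B * (x+1) := by
    have h1 : A * (1 + p * (1/x)) ≤ B := by
      rw [hmul]
      exact mul_le_mul_of_nonneg_left hBer hA0.le
    have h2 : (A * (1 + p * (1/x))) * (x+1) = A*(x+1) + p*A*(x+1)/x := by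
      field_simp
    have h3 : p*A ≤ p*A*(x+1)/x := by
      rw [le_div_iff₀ hx0]
      nlinarith
    nlinarith [mul_le_mul_of_nonneg_right h1 hx1.le]
  have hkey : p * A * B ≤ (B - A) * ((x+1) * B) := by
    have h2 : p * A ≤ (B - A) * (x+1) := by nlinarith
    nlinarith [mul_le_mul_of_nonneg_right h2 hB0.le]
  have hrepr : p⁻¹ * (x ^ (-p) - (x+1) ^ (-p)) = (B - A)/(p*(A*B)) := by
    rw [Real.rpow_neg hx0.le, Real.rpow_neg hx1.le, ← hA, ← hB]
    field_simp
  have hlhs : (x+1) ^ (-(p+1)) = 1/(B*(x+1)) := by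
    rw [Real.rpow_neg hx1.le, Real.rpow_add hx1, Real.rpow_one, ← hB, one_div]
  rw [hrepr, hlhs, div_le_div_iff₀ (by positivity) (by positivity)]
  nlinarith [hkey]

lemma aux_summable {Δ : ℝ} (hΔ : 1 < Δ) :
    Summable (fun k : ℕ => ((k:ℝ)+1) ^ (-(2*Δ))) := by
  have h : Summable (fun n : ℕ => (n:ℝ) ^ (-(2*Δ))) :=
    Real.summable_nat_rpow.mpr (by linarith)
  have h2 := (summable_nat_add_iff 1).mpr h
  simpa using h2

lemma aux_tail {Δ : ℝ} (hΔ : 1 < Δ) {K : ℕ} (hK : 1 ≤ K) :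
    ∑' k : ℕ, (((k + K : ℕ) : ℝ) + 1) ^ (-(2*Δ)) ≤ (2*Δ-1)⁻¹ * (K:ℝ) ^ (-(2*Δ-1)) := by
  set p : ℝ := 2*Δ - 1 with hpdef
  have hp : 1 ≤ p := by rw [hpdef]; linarith
  have hp0 : 0 < p := by linarith
  have hsum : Summable (fun k : ℕ => (((k + K : ℕ) : ℝ) + 1) ^ (-(2*Δ))) :=
    (summable_nat_add_iff K).mpr (aux_summable hΔ)
  apply Summable.tsum_le_of_sum_le hsum
  intro u
  obtain ⟨n, hn⟩ := u.exists_nat_subset_range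
  set g : ℕ → ℝ := fun j => ((j:ℝ)+(K:ℝ)) ^ (-p) with hg
  calc ∑ k ∈ u, (((k + K : ℕ) : ℝ) + 1) ^ (-(2*Δ))
      ≤ ∑ k ∈ Finset.range n, (((k + K : ℕ) : ℝ) + 1) ^ (-(2*Δ)) :=
        Finset.sum_le_sum_of_subset_of_nonneg hn (fun i _ _ => by positivity)
    _ ≤ ∑ k ∈ Finset.range n, p⁻¹ * (g k - g (k+1)) := by
        apply Finset.sum_le_sum
        intro k _
        have hx : (1:ℝ) ≤ ((k + K : ℕ) : ℝ) := by
          have : 1 ≤ k + K := le_trans hK (Nat.le_add_left K k)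
          exact_mod_cast this
        have hstep := aux_step hp hx
        have e1 : -(p+1) = -(2*Δ) := by rw [hpdef]; ring
        have e2 : ((k + K : ℕ) : ℝ) = (k:ℝ) + (K:ℝ) := by push_cast; ring
        rw [e1, e2] at hstep
        simp only [hg]
        push_cast
        convert hstep using 3
        · rfl
        · ring
    _ = p⁻¹ * ∑ k ∈ Finset.range n, (g k - g (k+1)) := by rw [Finset.mul_sum]
    _ = p⁻¹ * (g 0 - g n) := by rw [Finset.sum_range_sub' g]
    _ ≤ p⁻¹ * g 0 := by
        have : 0 ≤ g n := by rw [hg]; positivity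
        have h0 : 0 ≤ p⁻¹ := by positivity
        nlinarith
    _ = p⁻¹ * (K:ℝ) ^ (-p) := by rw [hg]; norm_num

lemma aux_natsum : ∀ m : ℕ, ∑ k ∈ Finset.range m, 2^(2^(k+1)) ≤ 2^(2^m + 1) := by
  intro m
  induction m with
  | zero => simp
  | succ m ih =>
    rw [Finset.sum_range_succ]
    have h1 : 2^(2^m + 1) ≤ 2^(2^(m+1)) := by
      apply Nat.pow_le_pow_right (by norm_num)
      have : 1 ≤ 2^m := Nat.one_le_two_pow
      calc 2^m + 1 ≤ 2^m + 2^m := by omega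
        _ = 2^(m+1) := by rw [pow_succ]; ring
    calc ∑ k ∈ Finset.range m, 2^(2^(k+1)) + 2^(2^(m+1))
        ≤ 2^(2^m+1) + 2^(2^(m+1)) := by omega
      _ ≤ 2^(2^(m+1)) + 2^(2^(m+1)) := by omega
      _ = 2^(2^(m+1)+1) := by rw [pow_succ]; ring

lemma aux_key {L : ℝ} (hL : Real.exp 1 < L) {K : ℕ} (hK2 : (K:ℝ) ≤ Real.log L + 1) :
    ((2:ℝ)^(2^K : ℕ)) * Real.exp (-L) ≤ Real.exp 2 := by
  have hL0 : (0:ℝ) < L := lt_trans (Real.exp_pos 1) hL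
  have hlog2 : Real.log 2 < 0.6931471808 := Real.log_two_lt_d9
  have hlog2pos : (0:ℝ) < Real.log 2 := Real.log_pos one_lt_two
  set M := Real.log L with hM
  have hM1 : 1 ≤ M := by
    rw [hM, show (1:ℝ) = Real.log (Real.exp 1) by rw [Real.log_exp]]
    exact (Real.log_le_log_iff (Real.exp_pos 1) hL0).mpr hL.le
  have step1 : ((2:ℝ)^(2^K : ℕ)) = Real.exp (((2^K : ℕ):ℝ) * Real.log 2) := by
    rw [Real.exp_nat_mul, Real.exp_log (by norm_num : (0:ℝ) < 2)]
  have step2 : ((2^K : ℕ):ℝ) ≤ 2 * (Real.log 2 * L + 1) := by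
    have e1 : ((2^K : ℕ):ℝ) = (2:ℝ) ^ ((K:ℕ):ℝ) := by
      rw [Real.rpow_natCast]; push_cast; ring
    have e2 : (2:ℝ) ^ ((K:ℕ):ℝ) ≤ (2:ℝ) ^ (M + 1) :=
      Real.rpow_le_rpow_of_exponent_le (by norm_num) hK2
    have e3 : (2:ℝ) ^ (M + 1) = 2 * Real.exp (Real.log 2 * M) := by
      rw [Real.rpow_add (by norm_num : (0:ℝ) < 2), Real.rpow_one,
        Real.rpow_def_of_pos (by norm_num : (0:ℝ) < 2)]
      ring
    have e4 : Real.exp (Real.log 2 * M) = L ^ (Real.log 2) := by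
      rw [Real.rpow_def_of_pos hL0, hM]
      ring_nf
    have e5 : L ^ (Real.log 2) ≤ Real.log 2 * L + 1 := by
      have := Real.geom_mean_le_arith_mean2_weighted hlog2pos.le
        (by nlinarith : (0:ℝ) ≤ 1 - Real.log 2) hL0.le (zero_le_one)
        (by ring : Real.log 2 + (1 - Real.log 2) = 1)
      rw [Real.one_rpow, mul_one, mul_one] at this
      nlinarith [this]
    calc ((2^K : ℕ):ℝ) ≤ 2 * Real.exp (Real.log 2 * M) := by rw [e1, ← e3]; exact e2
      _ ≤ 2 * (Real.log 2 * L + 1) := by rw [e4]; nlinarith [e5]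
  rw [step1, ← Real.exp_add, Real.exp_le_exp]
  nlinarith [mul_le_mul_of_nonneg_right step2 hlog2pos.le, hlog2pos, hlog2, hL0]

lemma aux_expneg {p L : ℝ} (hp : 1 ≤ p) (hL : Real.exp 1 < L) :
    Real.exp (-(L/2)) ≤ (2*p)^p * (Real.log L)^(-p) := by
  have hL0 : (0:ℝ) < L := lt_trans (Real.exp_pos 1) hL
  have hp0 : (0:ℝ) < p := by linarith
  set M := Real.log L with hM
  have hM1 : 1 ≤ M := by
    rw [hM, show (1:ℝ) = Real.log (Real.exp 1) by rw [Real.log_exp]]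
    exact (Real.log_le_log_iff (Real.exp_pos 1) hL0).mpr hL.le
  have hM0 : 0 < M := by linarith
  have hML : M ≤ L := le_trans (by nlinarith [Real.log_le_sub_one_of_pos hL0]) (le_refl L)
  have h1 : L/(2*p) ≤ Real.exp (L/(2*p)) := by
    have := Real.add_one_le_exp (L/(2*p))
    linarith
  have h2 : (L/(2*p)) ^ p ≤ Real.exp (L/2) := by
    calc (L/(2*p)) ^ p ≤ (Real.exp (L/(2*p))) ^ p :=
          Real.rpow_le_rpow (by positivity) h1 hp0.le
      _ = Real.exp (L/2) := by
          rw [← Real.exp_mul]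
          congr 1
          field_simp
  have h3 : M ^ p ≤ (2*p) ^ p * Real.exp (L/2) := by
    calc M ^ p ≤ L ^ p := Real.rpow_le_rpow hM0.le hML hp0.le
      _ = (2*p) ^ p * (L/(2*p)) ^ p := by
          rw [← Real.mul_rpow (by positivity) (by positivity)]
          congr 1
          field_simp
      _ ≤ (2*p) ^ p * Real.exp (L/2) :=
          mul_le_mul_of_nonneg_left h2 (by positivity)
  rw [Real.exp_neg, Real.rpow_neg hM0.le, inv_eq_one_div, ← div_eq_mul_inv,
    div_le_div_iff₀ (Real.exp_pos _) (Real.rpow_pos_of_pos hM0 p)]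
  nlinarith [h3]

set_option maxHeartbeats 2000000 in
/-- Example 2.2, upper bound:
`ω[s](δ) ≤ C₄ (ln |ln δ|)^{1-2Δ}` for `0 < δ < e^{-e}`. -/
theorem superlacFun_modCont_upper (Δ : ℝ) (hΔ : 1 < Δ) :
    ∃ C₄ : ℝ, 0 < C₄ ∧ ∀ δ : ℝ, δ ∈ Set.Ioo (0 : ℝ) (Real.exp (-(Real.exp 1))) →
      modCont (superlacFun Δ) δ ≤ C₄ * Real.log |Real.log δ| ^ (1 - 2 * Δ) := by
  set p : ℝ := 2*Δ - 1 with hpdef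
  have hp1 : 1 ≤ p := by rw [hpdef]; linarith
  have hp0 : 0 < p := by linarith
  set C₄ : ℝ := 2*Real.exp 1*(2*p)^p + Real.exp 2 + 2*p⁻¹ with hC
  have hC0 : 0 < C₄ := by
    have h1 : (0:ℝ) < (2*p)^p := Real.rpow_pos_of_pos (by linarith) p
    have h2 : (0:ℝ) < Real.exp 1 := Real.exp_pos 1
    have h3 : (0:ℝ) < Real.exp 2 := Real.exp_pos 2
    have h4 : (0:ℝ) < p⁻¹ := by positivity
    rw [hC]; positivity
  refine ⟨C₄, hC0, ?_⟩
  rintro δ ⟨hδ0, hδ1⟩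
  set L : ℝ := -Real.log δ with hLdef
  have hlogδ : Real.log δ < -(Real.exp 1) := by
    calc Real.log δ < Real.log (Real.exp (-(Real.exp 1))) := Real.log_lt_log hδ0 hδ1
      _ = -(Real.exp 1) := Real.log_exp _
  have hL : Real.exp 1 < L := by rw [hLdef]; linarith
  have hL0 : (0:ℝ) < L := lt_trans (Real.exp_pos 1) hL
  have habslog : |Real.log δ| = L := by
    rw [hLdef, abs_of_neg (by nlinarith [Real.exp_pos 1] : Real.log δ < 0)]
  set M : ℝ := Real.log L with hMdef
  have hM1 : 1 < M := by
    rw [hMdef, show (1:ℝ) = Real.log (Real.exp 1) by rw [Real.log_exp]]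
    exact Real.log_lt_log (Real.exp_pos 1) hL
  have hM0 : (0:ℝ) < M := by linarith
  have hδL : δ = Real.exp (-L) := by rw [hLdef, neg_neg, Real.exp_log hδ0]
  have hMp0 : (0:ℝ) < M ^ (-p) := Real.rpow_pos_of_pos hM0 _
  have hRHS : Real.log |Real.log δ| ^ (1-2*Δ) = M ^ (-p) := by
    rw [habslog, ← hMdef]
    congr 1
    rw [hpdef]; ring
  rw [hRHS]
  apply Real.sSup_le _ (by positivity)
  rintro y ⟨t, h, hh, rfl⟩
  -- K
  set K : ℕ := ⌈M⌉₊ with hKdef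
  have hK1 : 1 ≤ K := Nat.one_le_ceil_iff.mpr hM0
  have hKM : M ≤ (K:ℝ) := Nat.le_ceil M
  have hK2 : (K:ℝ) ≤ M + 1 := le_of_lt (Nat.ceil_lt_add_one hM0.le)
  obtain ⟨K', hK'⟩ : ∃ K', K = K' + 1 := ⟨K - 1, by omega⟩
  -- sequences
  set c : ℕ → ℝ := fun k => ((k:ℝ)+1) ^ (-(2*Δ)) with hc
  set a : ℕ → ℝ := fun k => (2:ℝ)^(2^(k+1) : ℕ) with ha
  have hc0 : ∀ k, 0 ≤ c k := fun k => Real.rpow_nonneg (by positivity) _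
  have hc1 : ∀ k, c k ≤ 1 := fun k =>
    Real.rpow_le_one_of_one_le_of_nonpos (by have := Nat.cast_nonneg (α := ℝ) k; linarith) (by linarith)
  have ha0 : ∀ k, 0 ≤ a k := fun k => by rw [ha]; positivity
  have hcsum : Summable c := aux_summable hΔ
  set F : ℕ → ℂ := fun k => (c k : ℂ) *
    (Complex.exp (Complex.I * (2:ℂ)^(2^(k+1)) * ((t+h:ℝ):ℂ)) -
      Complex.exp (Complex.I * (2:ℂ)^(2^(k+1)) * (t:ℂ))) with hF
  set E : ℕ → ℝ := fun k =>
    ‖Complex.exp (((a k * h : ℝ):ℂ) * Complex.I) - 1‖ with hE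
  have harg : ∀ (k:ℕ) (u:ℝ),
      Complex.I * (2:ℂ)^(2^(k+1)) * (u:ℂ) = ((a k * u : ℝ):ℂ) * Complex.I := by
    intro k u
    rw [ha]
    push_cast
    ring
  have hterm : ∀ k, ‖F k‖ = c k * E k := by
    intro k
    have hsplit : Complex.exp (Complex.I * (2:ℂ)^(2^(k+1)) * ((t+h:ℝ):ℂ)) -
        Complex.exp (Complex.I * (2:ℂ)^(2^(k+1)) * (t:ℂ))
        = Complex.exp (((a k * t:ℝ):ℂ) * Complex.I) *
          (Complex.exp (((a k * h:ℝ):ℂ) * Complex.I) - 1) := by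
      rw [harg k (t+h), harg k t, mul_sub, mul_one, ← Complex.exp_add]
      congr 2
      push_cast
      ring
    rw [hF]
    simp only
    rw [hsplit, norm_mul, norm_mul, Complex.norm_real, Real.norm_eq_abs, Complex.norm_exp_ofReal_mul_I,
      _root_.abs_of_nonneg (hc0 k), hE]
    ring
  have hE2 : ∀ k, E k ≤ 2 := fun k => aux_abs_exp_I_sub_one_le_two _
  have hE0 : ∀ k, 0 ≤ E k := fun k => norm_nonneg _
  have hEδ : ∀ k, E k ≤ a k * δ := by
    intro k
    calc E k ≤ |a k * h| := aux_abs_exp_I_sub_one_le _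
      _ = a k * |h| := by rw [abs_mul, _root_.abs_of_nonneg (ha0 k)]
      _ ≤ a k * δ := mul_le_mul_of_nonneg_left hh (ha0 k)
  have hgsum : Summable (fun k => c k * E k) :=
    Summable.of_nonneg_of_le (fun k => mul_nonneg (hc0 k) (hE0 k))
      (fun k => mul_le_mul_of_nonneg_left (hE2 k) (hc0 k)) (hcsum.mul_right 2)
  have hsummand : ∀ u : ℝ, Summable (fun k =>
      (c k : ℂ) * Complex.exp (Complex.I * (2:ℂ)^(2^(k+1)) * (u:ℂ))) := by
    intro u
    apply Summable.of_norm
    have heq : (fun k => ‖(c k : ℂ) * Complex.exp (Complex.I * (2:ℂ)^(2^(k+1)) * (u:ℂ))‖) = c := by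
      funext k
      rw [norm_mul, Complex.norm_real, Real.norm_eq_abs,
        _root_.abs_of_nonneg (hc0 k), harg k u, Complex.norm_exp_ofReal_mul_I, mul_one]
    rw [heq]
    exact hcsum
  have hdiff : superlacFun Δ (t+h) - superlacFun Δ t = ∑' k, F k := by
    rw [superlacFun, superlacFun, ← Summable.tsum_sub (hsummand (t+h)) (hsummand t)]
    congr 1
    funext k
    rw [hF]
    push_cast
    ring
  rw [hdiff]
  have hFnorm : (fun k => ‖F k‖) = fun k => c k * E k :=
    funext fun k => by rw [hterm k]
  have hFsum : Summable (fun k => ‖F k‖) := by rw [hFnorm]; exact hgsum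
  -- tail bound
  have htailsum : Summable (fun k => c (k+K) * E (k+K)) :=
    (summable_nat_add_iff K).mpr hgsum
  have hctail : Summable (fun k : ℕ => c (k+K)) := (summable_nat_add_iff K).mpr hcsum
  have hKp : (K:ℝ) ^ (-p) ≤ M ^ (-p) :=
    Real.rpow_le_rpow_of_nonpos hM0 hKM (by linarith)
  have htail : ∑' k, c (k+K) * E (k+K) ≤ 2 * p⁻¹ * M ^ (-p) := by
    calc ∑' k, c (k+K) * E (k+K) ≤ ∑' k : ℕ, c (k+K) * 2 :=
          Summable.tsum_le_tsum (fun k => mul_le_mul_of_nonneg_left (hE2 _) (hc0 _))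
            htailsum (hctail.mul_right 2)
      _ = (∑' k : ℕ, c (k+K)) * 2 := tsum_mul_right
      _ ≤ (p⁻¹ * (K:ℝ) ^ (-p)) * 2 := by
          have := aux_tail hΔ hK1
          rw [← hpdef] at this
          have h2 : ∑' k : ℕ, c (k+K) ≤ p⁻¹ * (K:ℝ) ^ (-p) := by
            simp only [hc]
            exact_mod_cast this
          nlinarith [h2]
      _ ≤ 2 * p⁻¹ * M ^ (-p) := by
          have hinv : (0:ℝ) ≤ p⁻¹ := by positivity
          nlinarith [mul_le_mul_of_nonneg_left hKp hinv]
  -- head: last term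
  have hkey : a K' * δ ≤ Real.exp 2 := by
    have : a K' = (2:ℝ)^(2^K : ℕ) := by rw [ha, hK']
    rw [this, hδL]
    exact aux_key hL (by rw [← hMdef]; exact hK2)
  have hlast : c K' * E K' ≤ Real.exp 2 * M ^ (-p) := by
    have h1 : c K' * E K' ≤ c K' * (a K' * δ) :=
      mul_le_mul_of_nonneg_left (hEδ K') (hc0 K')
    have h2 : c K' = (K:ℝ) ^ (-(2*Δ)) := by
      rw [hc, hK']
      push_cast
      ring_nf
    have h3 : (K:ℝ) ^ (-(2*Δ)) ≤ M ^ (-p) := by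
      calc (K:ℝ) ^ (-(2*Δ)) ≤ M ^ (-(2*Δ)) :=
            Real.rpow_le_rpow_of_nonpos hM0 hKM (by linarith)
        _ ≤ M ^ (-p) := Real.rpow_le_rpow_of_exponent_le (by linarith) (by rw [hpdef]; linarith)
    calc c K' * E K' ≤ c K' * (a K' * δ) := h1
      _ ≤ (K:ℝ) ^ (-(2*Δ)) * Real.exp 2 := by
          rw [← h2]
          exact mul_le_mul_of_nonneg_left hkey (hc0 K')
      _ ≤ M ^ (-p) * Real.exp 2 :=
          mul_le_mul_of_nonneg_right h3 (Real.exp_pos 2).le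
      _ = Real.exp 2 * M ^ (-p) := by ring
  -- head: rest
  have hrest : ∑ k ∈ Finset.range K', c k * E k ≤ 2*Real.exp 1*(2*p)^p * M ^ (-p) := by
    have h1 : ∑ k ∈ Finset.range K', c k * E k ≤ ∑ k ∈ Finset.range K', a k * δ := by
      apply Finset.sum_le_sum
      intro k _
      calc c k * E k ≤ 1 * (a k * δ) :=
            mul_le_mul (hc1 k) (hEδ k) (hE0 k) zero_le_one
        _ = a k * δ := one_mul _
    have h2 : ∑ k ∈ Finset.range K', a k ≤ ((2^(2^K'+1) : ℕ) : ℝ) := by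
      have hnat := aux_natsum K'
      have : ∑ k ∈ Finset.range K', a k = ((∑ k ∈ Finset.range K', 2^(2^(k+1)) : ℕ) : ℝ) := by
        rw [ha]
        push_cast
        rfl
      rw [this]
      exact_mod_cast hnat
    have h3 : ∑ k ∈ Finset.range K', a k * δ ≤ 2 * ((2:ℝ)^(2^K' : ℕ) * δ) := by
      rw [← Finset.sum_mul]
      have := mul_le_mul_of_nonneg_right h2 hδ0.le
      calc (∑ k ∈ Finset.range K', a k) * δ ≤ ((2^(2^K'+1) : ℕ) : ℝ) * δ := this
        _ = 2 * ((2:ℝ)^(2^K' : ℕ) * δ) := by push_cast [pow_succ]; ring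
    have hBnn : (0:ℝ) ≤ (2:ℝ)^(2^K' : ℕ) * δ := by positivity
    have hsq : ((2:ℝ)^(2^K' : ℕ) * δ)^2 ≤ (Real.exp (1 - L/2))^2 := by
      have e1 : ((2:ℝ)^(2^K' : ℕ))^2 = (2:ℝ)^(2^K : ℕ) := by
        rw [← pow_mul, hK', pow_succ]
      have e2 : ((2:ℝ)^(2^K' : ℕ) * δ)^2 = ((2:ℝ)^(2^K : ℕ) * δ) * δ := by
        rw [mul_pow, e1]
        ring
      have e3 : (2:ℝ)^(2^K : ℕ) * δ ≤ Real.exp 2 := by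
        rw [hδL]
        exact aux_key hL (by rw [← hMdef]; exact hK2)
      have e4 : ((2:ℝ)^(2^K : ℕ) * δ) * δ ≤ Real.exp 2 * δ :=
        mul_le_mul_of_nonneg_right e3 hδ0.le
      have e5 : Real.exp 2 * δ = (Real.exp (1 - L/2))^2 := by
        rw [hδL, ← Real.exp_add, sq, ← Real.exp_add]
        congr 1
        ring
      rw [e2]
      linarith [e4, e5.le, e5.ge]
    have hB : (2:ℝ)^(2^K' : ℕ) * δ ≤ Real.exp (1 - L/2) := by
      nlinarith [hsq, Real.exp_pos (1 - L/2), hBnn]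
    have hexpneg : Real.exp (-(L/2)) ≤ (2*p)^p * M ^ (-p) := by
      have := aux_expneg hp1 hL
      rw [← hMdef] at this
      exact this
    calc ∑ k ∈ Finset.range K', c k * E k ≤ ∑ k ∈ Finset.range K', a k * δ := h1
      _ ≤ 2 * ((2:ℝ)^(2^K' : ℕ) * δ) := h3
      _ ≤ 2 * Real.exp (1 - L/2) := by linarith [hB]
      _ = 2 * Real.exp 1 * Real.exp (-(L/2)) := by
          rw [show (1 - L/2) = 1 + -(L/2) by ring, Real.exp_add]
          ring
      _ ≤ 2 * Real.exp 1 * ((2*p)^p * M ^ (-p)) := by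
          have h4 : (0:ℝ) ≤ 2 * Real.exp 1 := by positivity
          exact mul_le_mul_of_nonneg_left hexpneg h4
      _ = 2*Real.exp 1*(2*p)^p * M ^ (-p) := by ring
  -- assemble
  calc ‖∑' k, F k‖ = ‖∑' k, F k‖ := rfl
    _ ≤ ∑' k, ‖F k‖ := norm_tsum_le_tsum_norm hFsum
    _ = ∑' k, c k * E k := by rw [hFnorm]
    _ = (∑ k ∈ Finset.range K, c k * E k) + ∑' k, c (k+K) * E (k+K) :=
        (Summable.sum_add_tsum_nat_add K hgsum).symm
    _ = ((∑ k ∈ Finset.range K', c k * E k) + c K' * E K') + ∑' k, c (k+K) * E (k+K) := by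
        rw [hK', Finset.sum_range_succ]
    _ ≤ (2*Real.exp 1*(2*p)^p * M ^ (-p) + Real.exp 2 * M ^ (-p)) + 2 * p⁻¹ * M ^ (-p) := by
        have := htail
        linarith [hrest, hlast, htail]
    _ = C₄ * M ^ (-p) := by rw [hC]; ring
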